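/- arXiv:math/0003179 — 5 statements merged into one kernel-verified Lean document; each statement's English description precedes it below -/
import Mathlib

section
/- The rational map (u,v) ↦ (x,y) = (u^n v^{-ℓ}, u^ℓ v^{n-ℓ}) sends any point of the affine Fermat curve u^Q + v^Q + 1 = 0 with v ≠ 0, where Q = n^2 - nℓ + ℓ^2, to a point of the affine generalized Hurwitz curve x^n y^ℓ + y^n + x^ℓ = 0. -/
/-- The map `(u,v) ↦ (u^n/v^ℓ, u^ℓ v^{n-ℓ})` sends the affine Fermat curve
`u^Q + v^Q + 1 = 0`, `Q = n^2 - nℓ + ℓ^2` (with `v ≠ 0`), to the affine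
generalized Hurwitz curve `x^n y^ℓ + y^n + x^ℓ = 0`. -/
theorem stmt6 {K : Type*} [Field K] (n ℓ : ℕ) (hl : 2 ≤ ℓ) (hn : ℓ ≤ n)
    (u v : K) (hv : v ≠ 0)
    (h : u ^ (n ^ 2 - n * ℓ + ℓ ^ 2) + v ^ (n ^ 2 - n * ℓ + ℓ ^ 2) + 1 = 0) :
    (u ^ n / v ^ ℓ) ^ n * (u ^ ℓ * v ^ (n - ℓ)) ^ ℓ
      + (u ^ ℓ * v ^ (n - ℓ)) ^ n + (u ^ n / v ^ ℓ) ^ ℓ = 0 := by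
  obtain ⟨a, rfl⟩ : ∃ a, n = a + ℓ := ⟨n - ℓ, by omega⟩
  have hQ : (a + ℓ) ^ 2 - (a + ℓ) * ℓ + ℓ ^ 2 = a ^ 2 + a * ℓ + ℓ ^ 2 := by
    have h1 : (a + ℓ) ^ 2 = a ^ 2 + a * ℓ + (a + ℓ) * ℓ := by ring
    have h2 : (a + ℓ) * ℓ = a * ℓ + ℓ ^ 2 := by ring
    omega
  rw [hQ] at h
  have hs : a + ℓ - ℓ = a := by omega
  rw [hs]
  have hvl : (v : K) ^ (ℓ ^ 2) ≠ 0 := pow_ne_zero _ hv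
  have key : ((u ^ (a + ℓ) / v ^ ℓ) ^ (a + ℓ) * (u ^ ℓ * v ^ a) ^ ℓ
      + (u ^ ℓ * v ^ a) ^ (a + ℓ) + (u ^ (a + ℓ) / v ^ ℓ) ^ ℓ) * v ^ (ℓ ^ 2)
      = u ^ (a * ℓ + ℓ ^ 2)
        * (u ^ (a ^ 2 + a * ℓ + ℓ ^ 2) + v ^ (a ^ 2 + a * ℓ + ℓ ^ 2) + 1) := by
    field_simp
    have e1 : v ^ ℓ ^ 2 * v⁻¹ ^ ℓ ^ 2 = 1 := by rw [← mul_pow, mul_inv_cancel₀ hv, one_pow]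
    have e2 : v ^ (a * ℓ) * v⁻¹ ^ (a * ℓ) = 1 := by rw [← mul_pow, mul_inv_cancel₀ hv, one_pow]
    linear_combination (u ^ (a * ℓ) * u ^ ℓ ^ 2 + u ^ (a * ℓ * 2) * u ^ a ^ 2 * u ^ (ℓ ^ 2 * 2) * (v ^ (a * ℓ) * v⁻¹ ^ (a * ℓ))) * e1 + u ^ (a * ℓ * 2) * u ^ a ^ 2 * u ^ (ℓ ^ 2 * 2) * e2
  rw [h, mul_zero] at key
  exact (mul_eq_zero.mp key).resolve_right hvl
end

section
/- Let n ≥ 2 and let H be the numerical semigroup generated by S = {s(n-1)+1 : s = 1, ..., n}. Then the number of gaps of H, i.e. #(ℕ \ H), equals n(n-1)/2. -/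
lemma gen_mem_aux (n : ℕ) (hn : 2 ≤ n) : ∀ k, 1 ≤ k → ∀ S, k ≤ S → S ≤ k * n →
    S * (n - 1) + k ∈ AddSubmonoid.closure {m : ℕ | ∃ s, 1 ≤ s ∧ s ≤ n ∧ m = s * (n - 1) + 1} := by
  intro k hk
  induction k, hk using Nat.le_induction with
  | base =>
    intro S h1 h2
    exact AddSubmonoid.subset_closure ⟨S, h1, by simpa using h2, rfl⟩
  | succ k hk ih =>
    intro S h1 h2
    set s := max 1 (S - k * n) with hs
    have hcase : (s = 1 ∧ S - k * n ≤ 1) ∨ (s = S - k * n ∧ 1 ≤ S - k * n) := by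
      rcases max_cases 1 (S - k*n) with ⟨h, h'⟩ | ⟨h, h'⟩
      · exact Or.inl ⟨h, h'⟩
      · exact Or.inr ⟨h, le_of_lt h'⟩
    have hkn : k ≤ k * n := Nat.le_mul_of_pos_right _ (by omega)
    have hsum : S ≤ k * n + n := by
      calc S ≤ (k+1) * n := h2
      _ = k * n + n := by ring
    have hs1 : 1 ≤ s := le_max_left _ _
    have hsn : s ≤ n := by omega
    have hsS : s ≤ S := by omega
    have hT1 : k ≤ S - s := by omega
    have hT2 : S - s ≤ k * n := by omega
    have hm := ih (S - s) hT1 hT2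
    have hg : s * (n-1) + 1 ∈ AddSubmonoid.closure {m : ℕ | ∃ s, 1 ≤ s ∧ s ≤ n ∧ m = s * (n - 1) + 1} :=
      AddSubmonoid.subset_closure ⟨s, hs1, hsn, rfl⟩
    have hadd := AddSubmonoid.add_mem _ hm hg
    have heq : (S - s) * (n-1) + k + (s * (n-1) + 1) = S * (n-1) + (k+1) := by
      have : (S - s) * (n-1) + s * (n-1) = S * (n-1) := by
        rw [← Nat.add_mul]; congr 1; omega
      omega
    rwa [heq] at hadd

lemma mem_char_aux (n : ℕ) (hn : 2 ≤ n) (m : ℕ) :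
    m ∈ AddSubmonoid.closure {m : ℕ | ∃ s, 1 ≤ s ∧ s ≤ n ∧ m = s * (n - 1) + 1} ↔
    m = 0 ∨ ∃ k S, 1 ≤ k ∧ k ≤ S ∧ S ≤ k * n ∧ m = S * (n - 1) + k := by
  constructor
  · intro hm
    induction hm using AddSubmonoid.closure_induction with
    | mem x hx =>
      obtain ⟨s, hs1, hsn, rfl⟩ := hx
      exact Or.inr ⟨1, s, le_refl 1, hs1, by simpa using hsn, rfl⟩
    | zero => exact Or.inl rfl
    | add x y hx hy ihx ihy =>
      rcases ihx with rfl | ⟨k1, S1, h1, h2, h3, rfl⟩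
      · simpa using ihy
      rcases ihy with rfl | ⟨k2, S2, g1, g2, g3, rfl⟩
      · exact Or.inr ⟨k1, S1, h1, h2, h3, by simp⟩
      · refine Or.inr ⟨k1 + k2, S1 + S2, by omega, by omega, ?_, by ring⟩
        calc S1 + S2 ≤ k1 * n + k2 * n := Nat.add_le_add h3 g3
        _ = (k1 + k2) * n := by ring
  · rintro (rfl | ⟨k, S, h1, h2, h3, rfl⟩)
    · exact AddSubmonoid.zero_mem _
    · exact gen_mem_aux n hn k h1 S h2 h3

lemma div_mod_eq_aux (d a r : ℕ) (h : r < d) : (a * d + r) / d = a ∧ (a * d + r) % d = r := by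
  constructor
  · rw [add_comm, Nat.add_mul_div_right _ _ (by omega : 0 < d), Nat.div_eq_of_lt h, Nat.zero_add]
  · rw [add_comm, Nat.add_mul_mod_self_right, Nat.mod_eq_of_lt h]

lemma char_iff_d_aux (d : ℕ) (hd : 1 ≤ d) (m : ℕ) :
    (∃ k S, 1 ≤ k ∧ k ≤ S ∧ S ≤ k * (d + 1) ∧ m = S * d + k) ↔
    (1 ≤ m ∧ (m - 1) % d < (m - 1) / d) := by
  constructor
  · rintro ⟨k, S, h1, h2, h3, rfl⟩
    obtain ⟨t, r, hrd, hkt⟩ : ∃ t r, r < d ∧ k - 1 = t * d + r :=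
      ⟨(k-1)/d, (k-1)%d, Nat.mod_lt _ (by omega), by rw [Nat.mul_comm]; exact (Nat.div_add_mod _ _).symm⟩
    have hring : (S + t) * d = S * d + t * d := by ring
    have hm1 : S * d + k - 1 = (S + t) * d + r := by omega
    obtain ⟨hdiv, hmod⟩ := div_mod_eq_aux d (S + t) r hrd
    rw [hm1, hdiv, hmod]
    exact ⟨by omega, by omega⟩
  · rintro ⟨hm1, hlt⟩
    obtain ⟨j, r, hrd, hm, hjr⟩ : ∃ j r, r < d ∧ m - 1 = j * d + r ∧ r < j :=
      ⟨(m-1)/d, (m-1)%d, Nat.mod_lt _ (by omega),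
        by rw [Nat.mul_comm]; exact (Nat.div_add_mod _ _).symm, hlt⟩
    obtain ⟨t, htn, htn2⟩ : ∃ t, t * (d+1) ≤ j - r - 1 ∧ j - r - 1 < t * (d+1) + (d+1) := by
      refine ⟨(j - r - 1)/(d+1), Nat.div_mul_le_self _ _, ?_⟩
      have h := Nat.div_add_mod (j-r-1) (d+1)
      have h2 := Nat.mod_lt (j-r-1) (show 0 < d+1 by omega)
      rw [Nat.mul_comm]; omega
    have h4 : t * (d+1) = t * d + t := by ring
    refine ⟨r + 1 + t * d, j - t, by omega, by omega, ?_, ?_⟩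
    · have h5 : (r + 1 + t * d) * (d+1) = (r+1) * (d+1) + (t*d) * (d+1) := by ring
      have h6 : r + 1 + d ≤ (r+1) * (d+1) := by nlinarith
      have h7 : t * d ≤ (t*d) * (d+1) := Nat.le_mul_of_pos_right _ (by omega)
      omega
    · have htt : t ≤ t * (d+1) := Nat.le_mul_of_pos_right _ (by omega)
      have htj : t ≤ j := by omega
      have h8 : (j - t) * d + t * d = j * d := by rw [← Nat.add_mul]; congr 1; omega
      omega

noncomputable def gapSetAux (d : ℕ) : Finset ℕ :=
  (Finset.range d).biUnion (fun r => (Finset.range (r+1)).image (fun j => j * d + r + 1))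

lemma mem_gapSetAux (d : ℕ) (hd : 1 ≤ d) (m : ℕ) :
    m ∈ gapSetAux d ↔ (1 ≤ m ∧ (m - 1) / d ≤ (m - 1) % d) := by
  simp only [gapSetAux, Finset.mem_biUnion, Finset.mem_range, Finset.mem_image]
  constructor
  · rintro ⟨r, hrd, j, hj, rfl⟩
    obtain ⟨hdiv, hmod⟩ := div_mod_eq_aux d j r hrd
    have : j * d + r + 1 - 1 = j * d + r := by omega
    rw [this, hdiv, hmod]
    exact ⟨by omega, by omega⟩
  · rintro ⟨h1, h2⟩
    refine ⟨(m-1) % d, Nat.mod_lt _ (by omega), (m-1)/d, by omega, ?_⟩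
    have := Nat.div_add_mod (m-1) d
    have h3 : d * ((m-1)/d) = ((m-1)/d) * d := by ring
    omega

lemma card_gapSetAux (d : ℕ) (hd : 1 ≤ d) : (gapSetAux d).card = (d + 1) * d / 2 := by
  have hcard : (gapSetAux d).card = ∑ r ∈ Finset.range d, (r + 1) := by
    rw [gapSetAux, Finset.card_biUnion]
    · apply Finset.sum_congr rfl
      intro r _
      rw [Finset.card_image_of_injective _ (fun a b hab => by
        have : a * d = b * d := by omega
        exact Nat.eq_of_mul_eq_mul_right (by omega) this)]
      simp
    · intro r1 h1 r2 h2 hne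
      simp only [Finset.mem_coe, Finset.mem_range] at h1 h2
      rw [Function.onFun, Finset.disjoint_left]
      rintro m hm1 hm2
      simp only [Finset.mem_image, Finset.mem_range] at hm1 hm2
      obtain ⟨j1, hj1, he1⟩ := hm1
      obtain ⟨j2, hj2, he2⟩ := hm2
      obtain ⟨_, hmod1⟩ := div_mod_eq_aux d j1 r1 (by omega)
      obtain ⟨_, hmod2⟩ := div_mod_eq_aux d j2 r2 (by omega)
      apply hne
      have : j1 * d + r1 = j2 * d + r2 := by omega
      rw [← hmod1, ← hmod2, this]
  rw [hcard]
  have h1 : ∑ r ∈ Finset.range d, (r + 1) = ∑ i ∈ Finset.range (d + 1), i := by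
    rw [Finset.sum_range_succ']; simp
  have h2 : (∑ i ∈ Finset.range (d + 1), i) * 2 = (d + 1) * d := by
    rw [Finset.sum_range_id_mul_two (d + 1)]; simp
  omega

/-- The numerical semigroup generated by `{s(n-1)+1 : 1 ≤ s ≤ n}` has exactly
`n(n-1)/2` gaps. -/
theorem stmt7 (n : ℕ) (hn : 2 ≤ n)
    (H : AddSubmonoid ℕ)
    (hH : H = AddSubmonoid.closure {m : ℕ | ∃ s, 1 ≤ s ∧ s ≤ n ∧ m = s * (n - 1) + 1}) :
    {m : ℕ | m ∉ H}.ncard = n * (n - 1) / 2 := by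
  subst hH
  have hn1 : n - 1 + 1 = n := by omega
  have hd : 1 ≤ n - 1 := by omega
  have hset : {m : ℕ | m ∉ AddSubmonoid.closure {m : ℕ | ∃ s, 1 ≤ s ∧ s ≤ n ∧ m = s * (n - 1) + 1}}
      = ↑(gapSetAux (n - 1)) := by
    ext m
    simp only [Set.mem_setOf_eq, Finset.coe_sort_coe, Finset.mem_coe]
    rw [mem_char_aux n hn m, mem_gapSetAux (n-1) hd m]
    have hiff := char_iff_d_aux (n-1) hd m
    rw [hn1] at hiff
    rw [hiff]
    generalize (m - 1) % (n - 1) = B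
    generalize (m - 1) / (n - 1) = A
    omega
  rw [hset, Set.ncard_coe_finset, card_gapSetAux (n-1) hd, hn1]
end

section
/- Let n ≥ 2, let H be the numerical semigroup generated by {s(n-1)+1 : s = 1, ..., n}, and let d be a divisor of n^2 - n + 1 with d ∈ H. Then d = n^2 - n + 1 or d = 1 — in fact, if d ∈ H and d divides n^2-n+1 with d > 1 then d = n^2-n+1. -/
/-- If `d > 1` lies in the semigroup generated by `{s(n-1)+1 : 1 ≤ s ≤ n}` and
divides `n^2 - n + 1`, then `d = n^2 - n + 1`. -/
theorem stmt8 (n : ℕ) (hn : 2 ≤ n)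
    (H : AddSubmonoid ℕ)
    (hH : H = AddSubmonoid.closure {m : ℕ | ∃ s, 1 ≤ s ∧ s ≤ n ∧ m = s * (n - 1) + 1})
    (d : ℕ) (hdH : d ∈ H) (hdvd : d ∣ n ^ 2 - n + 1) (hd1 : 1 < d) :
    d = n ^ 2 - n + 1 := by
  subst hH
  -- every element of the closure has the form A*(n-1) + B with B ≤ A ≤ n*B
  have key : ∀ x ∈ AddSubmonoid.closure {m : ℕ | ∃ s, 1 ≤ s ∧ s ≤ n ∧ m = s * (n - 1) + 1},
      ∃ A B : ℕ, B ≤ A ∧ A ≤ n * B ∧ x = A * (n - 1) + B := by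
    intro x hx
    induction hx using AddSubmonoid.closure_induction with
    | mem y hy =>
      obtain ⟨s, hs1, hsn, rfl⟩ := hy
      exact ⟨s, 1, hs1, by omega, rfl⟩
    | zero => exact ⟨0, 0, le_rfl, by omega, by simp⟩
    | add a b _ _ ha hb =>
      obtain ⟨A1, B1, h1, h1', rfl⟩ := ha
      obtain ⟨A2, B2, h2, h2', rfl⟩ := hb
      exact ⟨A1 + A2, B1 + B2, by omega, by nlinarith, by ring⟩
  obtain ⟨A, B, hBA, hAn, rfl⟩ := key _ hdH
  obtain ⟨m, rfl⟩ : ∃ m, n = m + 1 := ⟨n - 1, by omega⟩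
  have hm : 1 ≤ m := by omega
  have hm1 : m + 1 - 1 = m := by omega
  rw [hm1] at hd1 hdvd ⊢
  have hsq : (m + 1) ^ 2 = m * m + 2 * m + 1 := by ring
  have hN : (m + 1) ^ 2 - (m + 1) + 1 = m * m + m + 1 := by omega
  rw [hN] at hdvd ⊢
  obtain ⟨q, hq⟩ := hdvd
  have hq1 : 1 ≤ q := by
    rcases Nat.eq_zero_or_pos q with h | h
    · subst h; simp at hq
    · exact h
  have hB1 : 1 ≤ B := by
    rcases Nat.eq_zero_or_pos B with h | h
    · exfalso; subst h
      have hA0 : A = 0 := by simpa using hAn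
      subst hA0; simp at hd1
    · exact h
  -- expand the equation
  obtain ⟨P, hP⟩ : ∃ P, P = A * q := ⟨_, rfl⟩
  obtain ⟨Q, hQ⟩ : ∃ Q, Q = B * q := ⟨_, rfl⟩
  have heq : P * m + Q = m * m + m + 1 := by
    have hexp : (A * m + B) * q = A * q * m + B * q := by ring
    have h0 : A * q * m + B * q = m * m + m + 1 := by omega
    rw [hP, hQ]; exact h0
  have hQP : Q ≤ P := by rw [hP, hQ]; exact Nat.mul_le_mul_right q hBA
  have hQ1 : 1 ≤ Q := by
    rw [hQ]; exact Nat.one_le_iff_ne_zero.mpr (by positivity)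
  have hPle : P ≤ m + 1 := by
    have h1 : P * m ≤ (m + 1) * m := by
      have h2 : (m + 1) * m = m * m + m := by ring
      omega
    exact Nat.le_of_mul_le_mul_right h1 hm
  obtain ⟨k, hk⟩ : ∃ k, k = m + 1 - P := ⟨_, rfl⟩
  have hQk : Q = k * m + 1 := by
    have h1 : (P + k) * m = P * m + k * m := by ring
    have h3 : P + k = m + 1 := by omega
    rw [h3] at h1
    have h2 : (m + 1) * m = m * m + m := by ring
    omega
  have hk0 : k = 0 := by
    by_contra hk1
    have h1 : 1 ≤ k := by omega
    have h2 : m ≤ k * m := Nat.le_mul_of_pos_left m (by omega)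
    omega
  subst hk0
  have hQ1' : Q = 1 := by omega
  have hq' : q = 1 := Nat.eq_one_of_mul_eq_one_left (by omega : B * q = 1)
  subst hq'
  omega
end

section
/- Let n ≥ 2 and write any element of the semigroup generated by {s(n-1)+1 : 1 ≤ s ≤ n} which divides n^2-n+1 as d = A(n-1)+B with A ≥ B ≥ 1. If (A(n-1)+B)·C = n^2-n+1 for some C ≥ 1, then B = C = 1 and A = n. -/
/-- If `A ≥ B ≥ 1`, `C ≥ 1` and `(A(n-1)+B)·C = n^2-n+1` with `n ≥ 2`, then
`B = 1`, `C = 1` and `A = n`. -/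
theorem stmt9 (n A B C : ℕ) (hn : 2 ≤ n) (hB : 1 ≤ B) (hAB : B ≤ A) (hC : 1 ≤ C)
    (h : (A * (n - 1) + B) * C = n ^ 2 - n + 1) :
    B = 1 ∧ C = 1 ∧ A = n := by
  obtain ⟨m, rfl⟩ : ∃ m, n = m + 1 := ⟨n - 1, by omega⟩
  have hm : 1 ≤ m := by omega
  have hpow : (m + 1) ^ 2 = m * m + 2 * m + 1 := by ring
  have h' : (A * m + B) * C = m * m + m + 1 := by
    simp only [Nat.add_sub_cancel] at h
    rw [hpow] at h
    omega
  have hz : ((A : ℤ) * m + B) * C = m * m + m + 1 := by exact_mod_cast h'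
  have hdvd : (m : ℤ) ∣ (B : ℤ) * C - 1 :=
    ⟨(m : ℤ) + 1 - A * C, by linear_combination hz⟩
  -- If B*C ≥ 2 then B*C ≥ m+1
  have hBC : B * C = 1 ∨ m + 1 ≤ B * C := by
    rcases Nat.lt_or_ge (B * C) 2 with h2 | h2
    · left
      have h1 : 1 ≤ B * C := Nat.one_le_iff_ne_zero.mpr (Nat.mul_ne_zero (by omega) (by omega))
      omega
    · right
      have h3 : (0 : ℤ) < (B : ℤ) * C - 1 := by
        have : (2 : ℤ) ≤ (B : ℤ) * C := by exact_mod_cast h2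
        linarith
      have := Int.le_of_dvd h3 hdvd
      have : (m : ℤ) + 1 ≤ (B : ℤ) * C := by linarith
      exact_mod_cast this
  have hC1 : C = 1 := by
    by_contra hC2
    have hC2' : 2 ≤ C := by omega
    rcases hBC with h1 | h1
    · have hb1 : B ≤ 1 := Nat.le_of_dvd one_pos ⟨C, h1.symm⟩
      have hc1 : C ≤ 1 := Nat.le_of_dvd one_pos ⟨B, by rw [mul_comm]; exact h1.symm⟩
      omega
    · have k1 : (B * (m + 1)) * C ≤ (A * m + B) * C := by
        apply Nat.mul_le_mul_right
        nlinarith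
      have k2 : (m + 1) * (m + 1) ≤ (B * C) * (m + 1) :=
        Nat.mul_le_mul_right _ h1
      have k3 : (B * (m + 1)) * C = (B * C) * (m + 1) := by ring
      nlinarith
  subst hC1
  have h'' : A * m + B = m * m + m + 1 := by simpa using h'
  have hBm : B ≤ m := by
    by_contra hb
    have : m + 1 ≤ B := by omega
    have : m + 1 ≤ A := le_trans this hAB
    nlinarith
  have hB1 : B = 1 := by
    have hd : (m : ℤ) ∣ (B : ℤ) - 1 := by
      have h5 := hdvd
      push_cast at h5
      simpa using h5
    rcases eq_or_lt_of_le hB with h1 | h1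
    · omega
    · exfalso
      have h3 : (0 : ℤ) < (B : ℤ) - 1 := by
        have : (2 : ℤ) ≤ (B : ℤ) := by exact_mod_cast h1
        linarith
      have := Int.le_of_dvd h3 hd
      have : (m : ℤ) ≤ (B : ℤ) - 1 := this
      have hBm' : (B : ℤ) ≤ m := by exact_mod_cast hBm
      linarith
  subst hB1
  refine ⟨rfl, rfl, ?_⟩
  have : A * m = (m + 1) * m := by nlinarith [h'']
  exact Nat.eq_of_mul_eq_mul_right hm this
end

section
/- Let n > ℓ ≥ 1 with gcd(n,ℓ) = 1, and let H = {(n-ℓ)s + nt : s,t ∈ ℤ, t ≥ 0, -ℓt/n ≤ s ≤ (n-ℓ)t/ℓ} (i.e. ns + ℓt ≥ 0 and -ℓs + (n-ℓ)t ≥ 0). Then H is a submonoid of ℕ, and the number of gaps #(ℕ \ H) equals (n^2 - nℓ + ℓ^2 - 1)/2. -/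
noncomputable def gam16 (D : ℕ) [NeZero D] (ℓ a : ℕ) (m : ℕ) : ℕ :=
  ((-(ℓ : ZMod D) * (m : ZMod D)) * (a : ZMod D)⁻¹).val

lemma gam16_lt (D : ℕ) [NeZero D] (ℓ a m : ℕ) : gam16 D ℓ a m < D := ZMod.val_lt _

lemma gam16_spec (D : ℕ) [NeZero D] (ℓ a : ℕ) (ha : Nat.Coprime a D) (m : ℕ) :
    D ∣ ℓ * m + a * gam16 D ℓ a m := by
  rw [← ZMod.natCast_eq_zero_iff]
  push_cast
  rw [gam16, ZMod.natCast_val, ZMod.cast_id]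
  have hu := ZMod.coe_mul_inv_eq_one a ha
  linear_combination (-(ℓ : ZMod D) * (m : ZMod D)) * hu

lemma gam16_unique (D : ℕ) [NeZero D] (ℓ a : ℕ) (ha : Nat.Coprime a D) (m g : ℕ)
    (hg : g < D) (hdvd : D ∣ ℓ * m + a * g) : g = gam16 D ℓ a m := by
  have h1 : ((ℓ * m + a * g : ℕ) : ZMod D) = 0 :=
    (ZMod.natCast_eq_zero_iff _ _).mpr hdvd
  have h2 : ((ℓ * m + a * gam16 D ℓ a m : ℕ) : ZMod D) = 0 :=
    (ZMod.natCast_eq_zero_iff _ _).mpr (gam16_spec D ℓ a ha m)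
  push_cast at h1 h2
  have hu := ZMod.coe_mul_inv_eq_one a ha
  have h4 : (g : ZMod D) = ((gam16 D ℓ a m : ℕ) : ZMod D) := by
    linear_combination (a : ZMod D)⁻¹ * (h1 - h2)
      - ((g : ZMod D) - ((gam16 D ℓ a m : ℕ) : ZMod D)) * hu
  calc g = ((g : ℕ) : ZMod D).val := (ZMod.val_cast_of_lt hg).symm
    _ = ((gam16 D ℓ a m : ℕ) : ZMod D).val := by rw [h4]
    _ = gam16 D ℓ a m := ZMod.val_cast_of_lt (gam16_lt D ℓ a m)

/-- For coprime `n > ℓ ≥ 1`, the set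
`H = {(n-ℓ)s + nt : s,t ∈ ℤ, t ≥ 0, ns + ℓt ≥ 0, -ℓs + (n-ℓ)t ≥ 0}`
is a submonoid of `ℕ` whose number of gaps is `(n^2 - nℓ + ℓ^2 - 1)/2`. -/
theorem stmt16 (n ℓ : ℕ) (hl : 1 ≤ ℓ) (hln : ℓ < n) (hco : Nat.Coprime n ℓ)
    (H : Set ℕ)
    (hH : H = {m : ℕ | ∃ s t : ℤ, 0 ≤ t ∧ 0 ≤ (n : ℤ) * s + (ℓ : ℤ) * t ∧
      0 ≤ -(ℓ : ℤ) * s + ((n : ℤ) - ℓ) * t ∧ (m : ℤ) = ((n : ℤ) - ℓ) * s + n * t}) :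
    (0 ∈ H) ∧ (∀ a ∈ H, ∀ b ∈ H, a + b ∈ H) ∧
    {m : ℕ | m ∉ H}.ncard = (n ^ 2 - n * ℓ + ℓ ^ 2 - 1) / 2 := by
  subst hH
  refine ⟨⟨0, 0, le_refl 0, by norm_num, by norm_num, by norm_num⟩, ?_, ?_⟩
  · rintro x ⟨s₁, t₁, h1, h2, h3, h4⟩ y ⟨s₂, t₂, g1, g2, g3, g4⟩
    exact ⟨s₁ + s₂, t₁ + t₂, by linarith, by push_cast; linarith,
      by push_cast; linarith, by push_cast; linarith⟩
  · set a := n - ℓ with ha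
    have haℓ : a + ℓ = n := by omega
    have ha1 : 1 ≤ a := by omega
    have hn2 : 2 ≤ n := by omega
    set D := n * a + ℓ * ℓ with hDdef
    have hD3 : 3 ≤ D := by
      have q1 : 2 * 1 ≤ n * a := Nat.mul_le_mul hn2 ha1
      have q2 : 1 * 1 ≤ ℓ * ℓ := Nat.mul_le_mul hl hl
      rw [hDdef]; linarith
    haveI : NeZero D := ⟨by omega⟩
    have hacast : (a : ℤ) = (n : ℤ) - ℓ := by omega
    have hDcast : (D : ℤ) = (n : ℤ) * a + ℓ * ℓ := by push_cast [hDdef]; ring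
    -- coprimality facts
    have hcal : Nat.Coprime a ℓ := (Nat.coprime_sub_self_left hln.le).mpr hco
    have hcDl : Nat.Coprime D ℓ := by
      rw [hDdef]; exact (Nat.coprime_add_mul_left_left _ _ _).mpr (Nat.Coprime.mul hco hcal)
    have hcDa : Nat.Coprime D a := by
      have h1 : Nat.Coprime (ℓ * ℓ + a * n) a :=
        (Nat.coprime_add_mul_left_left _ _ _).mpr (Nat.Coprime.mul hcal.symm hcal.symm)
      have h2 : ℓ * ℓ + a * n = D := by rw [hDdef]; ring
      rwa [h2] at h1
    have hcDn : Nat.Coprime D n := by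
      have h1 : Nat.Coprime (ℓ * ℓ + n * a) n :=
        (Nat.coprime_add_mul_left_left _ _ _).mpr (Nat.Coprime.mul hco.symm hco.symm)
      have h2 : ℓ * ℓ + n * a = D := by rw [hDdef]; ring
      rwa [h2] at h1
    have hcaD : Nat.Coprime a D := hcDa.symm
    -- membership characterization
    have hmem : ∀ m : ℕ, (∃ s t : ℤ, 0 ≤ t ∧ 0 ≤ (n : ℤ) * s + (ℓ : ℤ) * t ∧
        0 ≤ -(ℓ : ℤ) * s + ((n : ℤ) - ℓ) * t ∧ (m : ℤ) = ((n : ℤ) - ℓ) * s + n * t) ↔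
        gam16 D ℓ a m ≤ m := by
      intro m
      constructor
      · rintro ⟨s, t, ht, hf, hg, hm⟩
        set F : ℤ := (n : ℤ) * s + (ℓ : ℤ) * t with hF
        set G : ℤ := -(ℓ : ℤ) * s + ((n : ℤ) - ℓ) * t with hG
        have hFG : F + G = (m : ℤ) := by rw [hm, hF, hG]; ring
        have hid : (ℓ : ℤ) * F + (n : ℤ) * G = (D : ℤ) * t := by
          rw [hF, hG, hDcast, hacast]; ring
        obtain ⟨g, hgG⟩ : ∃ g : ℕ, (g : ℤ) = G := ⟨G.toNat, Int.toNat_of_nonneg hg⟩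
        obtain ⟨f, hfF⟩ : ∃ f : ℕ, (f : ℤ) = F := ⟨F.toNat, Int.toNat_of_nonneg hf⟩
        have hfgm : f + g = m := by
          have : ((f + g : ℕ) : ℤ) = (m : ℤ) := by push_cast; rw [hfF, hgG]; exact hFG
          exact_mod_cast this
        have hdvdN : D ∣ ℓ * m + a * g := by
          have h1 : ((ℓ * m + a * g : ℕ) : ℤ) = (D : ℤ) * t := by
            push_cast
            linear_combination hid - (ℓ : ℤ) * hFG + (a : ℤ) * hgG + G * hacast
          have h2 : (D : ℤ) ∣ ((ℓ * m + a * g : ℕ) : ℤ) := Dvd.intro t h1.symm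
          exact_mod_cast h2
        have hmodlt : g % D < D := Nat.mod_lt _ (by omega)
        have hmoddvd : D ∣ ℓ * m + a * (g % D) := by
          have h5 : ℓ * m + a * g = (ℓ * m + a * (g % D)) + D * (a * (g / D)) := by
            conv_lhs => rw [← Nat.div_add_mod g D]
            ring
          have h6 : D ∣ D * (a * (g / D)) := Dvd.intro _ rfl
          have h7 := Nat.dvd_sub hdvdN h6
          have h8 : ℓ * m + a * g - D * (a * (g / D)) = ℓ * m + a * (g % D) := by
            rw [h5]; simp
          rwa [h8] at h7
        have h9 := gam16_unique D ℓ a hcaD m (g % D) hmodlt hmoddvd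
        calc gam16 D ℓ a m = g % D := h9.symm
          _ ≤ g := Nat.mod_le g D
          _ ≤ m := by omega
      · intro hle
        set g := gam16 D ℓ a m with hgdef
        set f := m - g with hfdef
        have hfg : f + g = m := Nat.sub_add_cancel hle
        have hdvd1 : D ∣ ℓ * f + n * g := by
          have he : ℓ * f + n * g = ℓ * m + a * g := by rw [← hfg, ← haℓ]; ring
          rw [he]; exact gam16_spec D ℓ a hcaD m
        obtain ⟨t, htEq⟩ : ∃ t : ℤ, ((ℓ * f + n * g : ℕ) : ℤ) = (D : ℤ) * t := by
          obtain ⟨t, ht⟩ := hdvd1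
          exact ⟨(t : ℤ), by exact_mod_cast congrArg (Nat.cast : ℕ → ℤ) ht⟩
        have hDpos : (0 : ℤ) < (D : ℤ) := by exact_mod_cast (by omega : 0 < D)
        have ht0 : 0 ≤ t := by
          by_contra hcon
          push_neg at hcon
          have h1 : (D : ℤ) * t < 0 := mul_neg_of_pos_of_neg hDpos hcon
          have h2 : (0 : ℤ) ≤ ((ℓ * f + n * g : ℕ) : ℤ) := Int.natCast_nonneg _
          linarith
        push_cast at htEq
        have hkey : (ℓ : ℤ) * ((a : ℤ) * f - (ℓ : ℤ) * g) =
            (a : ℤ) * ((ℓ : ℤ) * f + (n : ℤ) * g) - (D : ℤ) * g := by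
          rw [hDcast]; ring
        have hdvdmul : (D : ℤ) ∣ (ℓ : ℤ) * ((a : ℤ) * f - (ℓ : ℤ) * g) := by
          rw [hkey, htEq]
          exact dvd_sub (Dvd.intro _ rfl |>.mul_left _) (Dvd.intro _ rfl)
        have hcop' : IsCoprime ((D : ℕ) : ℤ) ((ℓ : ℕ) : ℤ) := Nat.isCoprime_iff_coprime.mpr hcDl
        obtain ⟨s, hsEq⟩ := IsCoprime.dvd_of_dvd_mul_left hcop' hdvdmul
        have hDne : (D : ℤ) ≠ 0 := by positivity
        have hns : (n : ℤ) * s + (ℓ : ℤ) * t = (f : ℤ) := by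
          apply mul_left_cancel₀ hDne
          linear_combination -(n : ℤ) * hsEq - (ℓ : ℤ) * htEq - (f : ℤ) * hDcast
        have hg2 : -(ℓ : ℤ) * s + ((n : ℤ) - ℓ) * t = (g : ℤ) := by
          apply mul_left_cancel₀ hDne
          rw [← hacast]
          linear_combination (ℓ : ℤ) * hsEq - (a : ℤ) * htEq - (g : ℤ) * hDcast
        refine ⟨s, t, ht0, ?_, ?_, ?_⟩
        · rw [hns]; exact Int.natCast_nonneg f
        · rw [hg2]; exact Int.natCast_nonneg g
        · have : ((f + g : ℕ) : ℤ) = (m : ℤ) := by exact_mod_cast hfg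
          push_cast at this
          linear_combination -this - hns - hg2
    -- the gap set as a finset
    have hγlt : ∀ m, gam16 D ℓ a m < D := fun m => gam16_lt D ℓ a m
    have hγ0 : gam16 D ℓ a 0 = 0 := by simp [gam16]
    classical
    have hne0 : ∀ m, 1 ≤ m → m < D → gam16 D ℓ a m ≠ 0 := by
      intro m h1 h2 h0
      have hsp := gam16_spec D ℓ a hcaD m
      rw [h0, Nat.mul_zero, Nat.add_zero, Nat.mul_comm] at hsp
      have := Nat.Coprime.dvd_of_dvd_mul_right hcDl hsp
      have := Nat.le_of_dvd (by omega) this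
      omega
    have hneq : ∀ m, 1 ≤ m → m < D → gam16 D ℓ a m ≠ m := by
      intro m h1 h2 he
      have hsp := gam16_spec D ℓ a hcaD m
      rw [he] at hsp
      have h3 : ℓ * m + a * m = m * n := by rw [← haℓ]; ring
      rw [h3] at hsp
      have := Nat.Coprime.dvd_of_dvd_mul_right hcDn hsp
      have := Nat.le_of_dvd (by omega) this
      omega
    have hrefl : ∀ m, 1 ≤ m → m < D → gam16 D ℓ a (D - m) = D - gam16 D ℓ a m := by
      intro m h1 h2
      have hg1 : gam16 D ℓ a m ≠ 0 := hne0 m h1 h2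
      have hglt := hγlt m
      refine (gam16_unique D ℓ a hcaD (D - m) (D - gam16 D ℓ a m) (by omega) ?_).symm
      have hid : ℓ * (D - m) + a * (D - gam16 D ℓ a m) + (ℓ * m + a * gam16 D ℓ a m)
          = ℓ * D + a * D := by
        zify [h2.le, hglt.le]
        ring
      have h6 : D ∣ ℓ * D + a * D := ⟨ℓ + a, by ring⟩
      have h7 := Nat.dvd_sub h6 (gam16_spec D ℓ a hcaD m)
      have h8 : ℓ * D + a * D - (ℓ * m + a * gam16 D ℓ a m)
          = ℓ * (D - m) + a * (D - gam16 D ℓ a m) := by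
        rw [← hid]; simp
      rwa [h8] at h7
    set T₁ := (Finset.Ico 1 D).filter (fun m => m < gam16 D ℓ a m) with hT₁
    set T₂ := (Finset.Ico 1 D).filter (fun m => gam16 D ℓ a m < m) with hT₂
    have hset : {m : ℕ | m ∉ {m : ℕ | ∃ s t : ℤ, 0 ≤ t ∧ 0 ≤ (n : ℤ) * s + (ℓ : ℤ) * t ∧
        0 ≤ -(ℓ : ℤ) * s + ((n : ℤ) - ℓ) * t ∧ (m : ℤ) = ((n : ℤ) - ℓ) * s + n * t}} = ↑T₁ := by
      ext m
      simp only [Set.mem_setOf_eq, hT₁, Finset.coe_filter, Finset.mem_Ico]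
      constructor
      · intro h
        have hlt : m < gam16 D ℓ a m := by
          by_contra hc
          push_neg at hc
          exact h ((hmem m).mpr hc)
        have hm0 : 1 ≤ m := by
          rcases Nat.eq_zero_or_pos m with h0 | h0
          · rw [h0] at hlt; rw [hγ0] at hlt; omega
          · exact h0
        exact ⟨⟨hm0, lt_trans hlt (hγlt m)⟩, hlt⟩
      · rintro ⟨⟨hm1, hm2⟩, hlt⟩ hmem'
        rw [hmem m] at hmem'
        omega
    have hbij : T₁.card = T₂.card := by
      apply Finset.card_nbij' (fun m => D - m) (fun m => D - m)
      · intro m hm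
        simp only [hT₁, Finset.mem_coe, Finset.mem_filter, Finset.mem_Ico] at hm
        obtain ⟨⟨h1, h2⟩, h3⟩ := hm
        have h4 := hγlt m
        simp only [hT₂, Finset.mem_coe, Finset.mem_filter, Finset.mem_Ico]
        refine ⟨⟨by omega, by omega⟩, ?_⟩
        rw [hrefl m h1 h2]
        omega
      · intro m hm
        simp only [hT₂, Finset.mem_coe, Finset.mem_filter, Finset.mem_Ico] at hm
        obtain ⟨⟨h1, h2⟩, h3⟩ := hm
        have h4 := hne0 m h1 h2
        simp only [hT₁, Finset.mem_coe, Finset.mem_filter, Finset.mem_Ico]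
        refine ⟨⟨by omega, by omega⟩, ?_⟩
        rw [hrefl m h1 h2]
        have h5 := hγlt m
        omega
      · intro m hm
        simp only [hT₁, Finset.mem_coe, Finset.mem_filter, Finset.mem_Ico] at hm ⊢
        omega
      · intro m hm
        simp only [hT₂, Finset.mem_coe, Finset.mem_filter, Finset.mem_Ico] at hm ⊢
        omega
    have hsum : T₁.card + T₂.card = D - 1 := by
      have he2 : T₂ = (Finset.Ico 1 D).filter (fun m => ¬ (m < gam16 D ℓ a m)) := by
        rw [hT₂]
        apply Finset.filter_congr
        intro m hm
        simp only [Finset.mem_Ico] at hm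
        have := hneq m hm.1 hm.2
        simp only [not_lt, eq_iff_iff]
        omega
      rw [hT₁, he2, Finset.card_filter_add_card_filter_not, Nat.card_Ico]
    rw [hset, Set.ncard_coe_finset]
    have h1 : n ^ 2 = n * a + n * ℓ := by
      rw [show n * a + n * ℓ = n * (a + ℓ) from (Nat.mul_add n a ℓ).symm, haℓ, pow_two]
    have h2 : ℓ ^ 2 = ℓ * ℓ := pow_two ℓ
    have e1 : n ^ 2 - n * ℓ + ℓ ^ 2 - 1 = D - 1 := by
      rw [h1, h2, Nat.add_sub_cancel, ← hDdef]
    rw [e1]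
    omega
end
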